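/- Let (X, T) and (Y, S) be topological dynamical systems and π_Y : X × Y → Y the second-coordinate projection. Let y_0 ∈ Y satisfy S^{s_0} y_0 = y_0 for some s_0 ∈ ℕ, and set ν = (1/s_0) Σ_{j=0}^{s_0−1} δ_{S^j y_0}. Then { λ ∈ M_{T×S}(X × Y) : (π_Y)_* λ = ν } = { (1/s_0) Σ_{j=0}^{s_0−1} (T × S)^j_* (μ × δ_{y_0}) : μ ∈ M_{T^{s_0}}(X) }. Consequently, for every f ∈ C(X × Y), ψ_f(ν) ≥ min_{x ∈ X} (1/s_0) Σ_{j=0}^{s_0−1} f(T^j x, S^j y_0). -/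

import Mathlib

open MeasureTheory Filter Topology BoundedContinuousFunction Set
open scoped NNReal ENNReal

noncomputable section

namespace KB

variable {Z : Type*} [MetricSpace Z] [CompactSpace Z] [Nonempty Z]

lemma isom_coe : Isometry ((↑) : ℝ≥0 → ℝ) := fun _ _ => rfl

/-- `ℝ`-valued version of an `ℝ≥0`-valued bounded continuous function. -/
def toR (f : Z →ᵇ ℝ≥0) : Z →ᵇ ℝ := f.comp _ isom_coe.lipschitz

@[simp] lemma toR_apply (f : Z →ᵇ ℝ≥0) (z : Z) : toR f z = (f z : ℝ) := rfl

lemma coe_le_norm (f : Z →ᵇ ℝ≥0) (z : Z) : (f z : ℝ) ≤ ‖toR f‖ := by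
  have h := (toR f).norm_coe_le_norm z
  rwa [toR_apply, Real.norm_eq_abs, abs_of_nonneg (f z).coe_nonneg] at h

/-- Birkhoff averaging sequence of a bounded continuous function. -/
def A (g : Z → Z) (x₀ : Z) (f : Z →ᵇ ℝ≥0) (n : ℕ) : ℝ :=
  (∑ k ∈ Finset.range n, (f (g^[k] x₀) : ℝ)) / n

lemma A_mem (g : Z → Z) (x₀ : Z) (f : Z →ᵇ ℝ≥0) (n : ℕ) :
    A g x₀ f n ∈ Icc (0:ℝ) ‖toR f‖ := by
  rcases Nat.eq_zero_or_pos n with rfl | hn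
  · simp [A, norm_nonneg]
  constructor
  · apply div_nonneg _ (Nat.cast_nonneg n)
    exact Finset.sum_nonneg fun k _ => (f (g^[k] x₀)).coe_nonneg
  · rw [A, div_le_iff₀ (by positivity)]
    calc (∑ k ∈ Finset.range n, (f (g^[k] x₀) : ℝ))
        ≤ ∑ _k ∈ Finset.range n, ‖toR f‖ :=
          Finset.sum_le_sum fun k _ => coe_le_norm f _
      _ = ‖toR f‖ * n := by simp [mul_comm]

lemma exists_lim (g : Z → Z) (x₀ : Z) (f : Z →ᵇ ℝ≥0) :
    ∃ L, L ∈ Icc (0:ℝ) ‖toR f‖ ∧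
      Tendsto (A g x₀ f) (hyperfilter ℕ : Filter ℕ) (𝓝 L) := by
  obtain ⟨L, hL, hle⟩ := (isCompact_Icc (a := (0:ℝ)) (b := ‖toR f‖)).ultrafilter_le_nhds
    ((hyperfilter ℕ).map (A g x₀ f)) (by
      rw [Ultrafilter.coe_map, Filter.le_principal_iff, Filter.mem_map]
      exact Filter.univ_mem' fun n => A_mem g x₀ f n)
  exact ⟨L, hL, by rwa [Ultrafilter.coe_map] at hle⟩

/-- An invariant normalized positive functional defined by ultrafilter limits of averages. -/
def Lam (g : Z → Z) (x₀ : Z) (f : Z →ᵇ ℝ≥0) : ℝ :=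
  (exists_lim g x₀ f).choose

lemma Lam_tendsto (g : Z → Z) (x₀ : Z) (f : Z →ᵇ ℝ≥0) :
    Tendsto (A g x₀ f) (hyperfilter ℕ : Filter ℕ) (𝓝 (Lam g x₀ f)) :=
  (exists_lim g x₀ f).choose_spec.2

lemma Lam_nonneg (g : Z → Z) (x₀ : Z) (f : Z →ᵇ ℝ≥0) : 0 ≤ Lam g x₀ f :=
  (exists_lim g x₀ f).choose_spec.1.1

lemma Lam_add (g : Z → Z) (x₀ : Z) (f h : Z →ᵇ ℝ≥0) :
    Lam g x₀ (f + h) = Lam g x₀ f + Lam g x₀ h := by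
  refine tendsto_nhds_unique (Lam_tendsto g x₀ (f + h)) ?_
  refine ((Lam_tendsto g x₀ f).add (Lam_tendsto g x₀ h)).congr fun n => ?_
  simp only [A, ← add_div]
  congr 1
  rw [← Finset.sum_add_distrib]
  exact Finset.sum_congr rfl fun k _ => by simp

lemma Lam_smul (g : Z → Z) (x₀ : Z) (c : ℝ≥0) (f : Z →ᵇ ℝ≥0) :
    Lam g x₀ (c • f) = c * Lam g x₀ f := by
  refine tendsto_nhds_unique (Lam_tendsto g x₀ (c • f)) ?_
  refine ((Lam_tendsto g x₀ f).const_mul (c : ℝ)).congr fun n => ?_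
  simp only [A, ← mul_div_assoc]
  congr 1
  rw [Finset.mul_sum]
  exact Finset.sum_congr rfl fun k _ => by simp [NNReal.smul_def]

lemma hyper_le_atTop : (hyperfilter ℕ : Filter ℕ) ≤ atTop :=
  Nat.cofinite_eq_atTop ▸ hyperfilter_le_cofinite

lemma Lam_one (g : Z → Z) (x₀ : Z) : Lam g x₀ 1 = 1 := by
  refine tendsto_nhds_unique (Lam_tendsto g x₀ 1) ?_
  have h1 : Tendsto (A g x₀ 1) atTop (𝓝 1) := by
    have he : ∀ᶠ n in atTop, (1:ℝ) = A g x₀ (1 : Z →ᵇ ℝ≥0) n := by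
      filter_upwards [eventually_ge_atTop 1] with n hn
      have hne : (n:ℝ) ≠ 0 := by positivity
      simp [A, hne]
    exact Tendsto.congr' he tendsto_const_nhds
  exact h1.mono_left hyper_le_atTop

lemma Lam_mono (g : Z → Z) (x₀ : Z) {f h : Z →ᵇ ℝ≥0} (hfh : ∀ z, f z ≤ h z) :
    Lam g x₀ f ≤ Lam g x₀ h := by
  refine le_of_tendsto_of_tendsto' (Lam_tendsto g x₀ f) (Lam_tendsto g x₀ h) fun n => ?_
  rcases Nat.eq_zero_or_pos n with rfl | hn
  · simp [A]
  · unfold A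
    rw [div_le_div_iff_of_pos_right (by positivity : (0:ℝ) < n)]
    exact Finset.sum_le_sum fun k _ => NNReal.coe_le_coe.mpr (hfh _)

lemma Lam_comp (g : Z → Z) (hg : Continuous g) (x₀ : Z) (f : Z →ᵇ ℝ≥0) :
    Lam g x₀ (f.compContinuous ⟨g, hg⟩) = Lam g x₀ f := by
  refine tendsto_nhds_unique (Lam_tendsto g x₀ _) ?_
  have key : ∀ n : ℕ, A g x₀ (f.compContinuous ⟨g, hg⟩) n
      = A g x₀ f n + ((f (g^[n] x₀) : ℝ) - (f x₀ : ℝ)) / n := by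
    intro n
    simp only [A, ← add_div]
    congr 1
    have hc : ∀ k, ((f.compContinuous ⟨g, hg⟩) (g^[k] x₀) : ℝ) = (f (g^[k+1] x₀) : ℝ) := by
      intro k
      rw [BoundedContinuousFunction.compContinuous_apply]
      rw [ContinuousMap.coe_mk, Function.iterate_succ_apply']
    rw [Finset.sum_congr rfl fun k _ => hc k]
    have h1 : ∑ k ∈ Finset.range n, (f (g^[k+1] x₀) : ℝ)
        = ∑ k ∈ Finset.range (n+1), (f (g^[k] x₀) : ℝ) - (f x₀ : ℝ) := by
      rw [Finset.sum_range_succ' (fun k => (f (g^[k] x₀) : ℝ)) n]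
      simp
    rw [h1, Finset.sum_range_succ]
    ring
  have hd : Tendsto (fun n : ℕ => ((f (g^[n] x₀) : ℝ) - (f x₀ : ℝ)) / n) atTop (𝓝 0) := by
    refine squeeze_zero_norm' ?_ (tendsto_const_div_atTop_nhds_zero_nat (2 * ‖toR f‖))
    filter_upwards [eventually_ge_atTop 1] with n hn
    rw [norm_div, Real.norm_natCast]
    have hb : ‖(f (g^[n] x₀) : ℝ) - (f x₀ : ℝ)‖ ≤ 2 * ‖toR f‖ := by
      rw [Real.norm_eq_abs]
      calc |(f (g^[n] x₀) : ℝ) - (f x₀ : ℝ)| ≤ |(f (g^[n] x₀) : ℝ)| + |(f x₀ : ℝ)| := abs_sub _ _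
        _ ≤ ‖toR f‖ + ‖toR f‖ := by
            gcongr
            · rw [abs_of_nonneg (f _).coe_nonneg]; exact coe_le_norm f _
            · rw [abs_of_nonneg (f _).coe_nonneg]; exact coe_le_norm f _
        _ = 2 * ‖toR f‖ := by ring
    gcongr
  have := (Lam_tendsto g x₀ f).add (hd.mono_left hyper_le_atTop)
  rw [add_zero] at this
  exact this.congr fun n => (key n).symm

/-- The functional packaged as an `ℝ≥0`-linear map. -/
def LamL (g : Z → Z) (x₀ : Z) : (Z →ᵇ ℝ≥0) →ₗ[ℝ≥0] ℝ≥0 where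
  toFun f := (Lam g x₀ f).toNNReal
  map_add' f h := by
    show (Lam g x₀ (f + h)).toNNReal = (Lam g x₀ f).toNNReal + (Lam g x₀ h).toNNReal
    rw [Lam_add]
    exact Real.toNNReal_add (Lam_nonneg g x₀ f) (Lam_nonneg g x₀ h)
  map_smul' c f := by
    simp only [RingHom.id_apply, smul_eq_mul]
    rw [Lam_smul, Real.toNNReal_mul c.coe_nonneg, Real.toNNReal_coe]

lemma LamL_mono (g : Z → Z) (x₀ : Z) {f h : Z →ᵇ ℝ≥0} (hfh : ∀ z, f z ≤ h z) :
    LamL g x₀ f ≤ LamL g x₀ h :=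
  Real.toNNReal_mono (Lam_mono g x₀ hfh)

lemma LamL_one (g : Z → Z) (x₀ : Z) : LamL g x₀ 1 = 1 := by
  show (Lam g x₀ 1).toNNReal = 1
  rw [Lam_one]; simp

lemma LamL_comp (g : Z → Z) (hg : Continuous g) (x₀ : Z) (f : Z →ᵇ ℝ≥0) :
    LamL g x₀ (f.compContinuous ⟨g, hg⟩) = LamL g x₀ f :=
  congrArg Real.toNNReal (Lam_comp g hg x₀ f)

/-- Conversion of a bounded continuous function into a compactly supported one. -/
def ofB (f : Z →ᵇ ℝ≥0) : CompactlySupportedContinuousMap Z ℝ≥0 :=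
  CompactlySupportedContinuousMap.continuousMapEquiv f.toContinuousMap

/-- The functional on compactly supported functions. -/
def LamC (g : Z → Z) (x₀ : Z) : CompactlySupportedContinuousMap Z ℝ≥0 →ₗ[ℝ≥0] ℝ≥0 where
  toFun f := LamL g x₀ f.toBoundedContinuousFunction
  map_add' f h := by
    rw [← map_add]
    congr 1
  map_smul' c f := by
    rw [RingHom.id_apply, ← map_smul]
    congr 1

lemma LamC_ofB (g : Z → Z) (x₀ : Z) (f : Z →ᵇ ℝ≥0) : LamC g x₀ (ofB f) = LamL g x₀ f := rfl

lemma LamC_mono (g : Z → Z) (x₀ : Z) {f h : CompactlySupportedContinuousMap Z ℝ≥0} (hfh : ∀ z, f z ≤ h z) :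
    LamC g x₀ f ≤ LamC g x₀ h :=
  LamL_mono g x₀ (f := f.toBoundedContinuousFunction) (h := h.toBoundedContinuousFunction) hfh

open TopologicalSpace in
lemma riesz_sup_disjoint (g : Z → Z) (x₀ : Z) (K₁ K₂ : Compacts Z)
    (hd : Disjoint (K₁ : Set Z) K₂) :
    rieszContentAux (LamC g x₀) (K₁ ⊔ K₂)
      = rieszContentAux (LamC g x₀) K₁ + rieszContentAux (LamC g x₀) K₂ :=
  rieszContentAux_union _ hd

open TopologicalSpace in
lemma riesz_top (g : Z → Z) (x₀ : Z) :
    rieszContentAux (LamC g x₀) ⊤ = 1 := by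
  refine le_antisymm ?_ ?_
  · have h1 : (LamC g x₀) (ofB 1) ∈ (LamC g x₀) '' {f : CompactlySupportedContinuousMap Z ℝ≥0 | ∀ x ∈ (⊤ : Compacts Z), 1 ≤ f x} :=
      mem_image_of_mem _ (fun x _ => le_refl _)
    have h2 := csInf_le (OrderBot.bddBelow _) h1
    rwa [LamC_ofB, LamL_one] at h2
  · refine le_csInf (rieszContentAux_image_nonempty _ _) ?_
    rintro b ⟨f, hf, rfl⟩
    calc (1:ℝ≥0) = LamC g x₀ (ofB 1) := by rw [LamC_ofB, LamL_one]
      _ ≤ LamC g x₀ f := LamC_mono g x₀ fun z => hf z (Set.mem_univ z)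

open TopologicalSpace in
lemma riesz_map (g : Z ≃ₜ Z) (x₀ : Z) (K : Compacts Z) :
    rieszContentAux (LamC (⇑g) x₀) (K.map ⇑g g.continuous)
      = rieszContentAux (LamC (⇑g) x₀) K := by
  unfold rieszContentAux
  congr 1
  ext b
  constructor
  · rintro ⟨f, hf, rfl⟩
    refine ⟨ofB (f.toBoundedContinuousFunction.compContinuous ⟨⇑g, g.continuous⟩),
      fun x hx => ?_, ?_⟩
    · have hgx : g x ∈ Compacts.map ⇑g g.continuous K := mem_image_of_mem _ hx
      have h1 := hf (g x) hgx
      show 1 ≤ f (g x)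
      exact h1
    · rw [LamC_ofB]
      exact LamL_comp (⇑g) g.continuous x₀ f.toBoundedContinuousFunction
  · rintro ⟨f, hf, rfl⟩
    refine ⟨ofB (f.toBoundedContinuousFunction.compContinuous ⟨⇑g.symm, g.symm.continuous⟩),
      ?_, ?_⟩
    · intro y hy
      obtain ⟨x, hx, rfl⟩ := hy
      show 1 ≤ f (g.symm (g x))
      rw [Homeomorph.symm_apply_apply]
      exact hf x hx
    · have h2 := LamL_comp (⇑g) g.continuous x₀
        (f.toBoundedContinuousFunction.compContinuous ⟨⇑g.symm, g.symm.continuous⟩)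
      have h3 : (f.toBoundedContinuousFunction.compContinuous
          ⟨⇑g.symm, g.symm.continuous⟩).compContinuous
          ⟨⇑g, g.continuous⟩ = f.toBoundedContinuousFunction := by
        ext z
        have : (f.toBoundedContinuousFunction.compContinuous
            ⟨⇑g.symm, g.symm.continuous⟩).compContinuous
            ⟨⇑g, g.continuous⟩ z = f z := by
          show f (g.symm (g z)) = f z
          rw [Homeomorph.symm_apply_apply]
        exact_mod_cast this
      rw [h3] at h2
      rw [LamC_ofB]
      exact h2.symm

/-- The Riesz content associated to the invariant functional. -/
def riesz (g : Z → Z) (x₀ : Z) : Content Z where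
  toFun := rieszContentAux (LamC g x₀)
  mono' := fun _ _ h => rieszContentAux_mono _ h
  sup_disjoint' := fun K₁ K₂ hd _ _ => riesz_sup_disjoint g x₀ K₁ K₂ hd
  sup_le' := fun K₁ K₂ => rieszContentAux_sup_le _ K₁ K₂

variable [MeasurableSpace Z] [BorelSpace Z]

/-- **Krylov–Bogolyubov**: a homeomorphism of a nonempty compact metric space admits an
invariant Borel probability measure. -/
theorem exists_invariant_prob (g : Z ≃ₜ Z) :
    ∃ μ : Measure Z, IsProbabilityMeasure μ ∧ μ.map ⇑g = μ := by
  classical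
  set x₀ := Classical.arbitrary Z with hx₀
  set c := riesz (⇑g) x₀ with hc
  refine ⟨c.measure, ⟨?_⟩, ?_⟩
  · rw [c.measure_apply MeasurableSet.univ,
      c.outerMeasure_of_isOpen univ isOpen_univ]
    have h2 : c.innerContent ⟨univ, isOpen_univ⟩ = c ⟨univ, isCompact_univ⟩ :=
      c.innerContent_of_isCompact isCompact_univ isOpen_univ
    rw [h2]
    show ((rieszContentAux (LamC (⇑g) x₀) ⟨univ, isCompact_univ⟩ : ℝ≥0) : ℝ≥0∞) = 1
    have : (⟨univ, isCompact_univ⟩ : TopologicalSpace.Compacts Z) = ⊤ := rfl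
    rw [this, riesz_top]
    simp
  · refine Measure.ext fun s hs => ?_
    rw [Measure.map_apply g.continuous.measurable hs,
      c.measure_apply (hs.preimage g.continuous.measurable), c.measure_apply hs]
    refine c.outerMeasure_preimage g (fun K => ?_) s
    show ((rieszContentAux (LamC (⇑g) x₀) (K.map ⇑g g.continuous) : ℝ≥0) : ℝ≥0∞)
        = ((rieszContentAux (LamC (⇑g) x₀) K : ℝ≥0) : ℝ≥0∞)
    exact congrArg _ (riesz_map g x₀ K)


section Helpers

lemma map_finsum {α β ι : Type*} [MeasurableSpace α] [MeasurableSpace β]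
    {f : α → β} (hf : Measurable f) (s : Finset ι) (μ : ι → Measure α) :
    (∑ i ∈ s, μ i).map f = ∑ i ∈ s, (μ i).map f := by
  classical
  induction s using Finset.induction_on with
  | empty => simp
  | insert _ _ hi ih =>
      rw [Finset.sum_insert hi, Finset.sum_insert hi, Measure.map_add _ _ hf, ih]

lemma cycle_sum {M : Type*} [AddCommMonoid M] (u : ℕ → M) (n : ℕ) (hn : 0 < n)
    (h : u n = u 0) : ∑ j ∈ Finset.range n, u (j + 1) = ∑ j ∈ Finset.range n, u j := by
  obtain ⟨m, rfl⟩ : ∃ m, n = m + 1 := ⟨n - 1, (Nat.succ_pred_eq_of_pos hn).symm⟩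
  rw [Finset.sum_range_succ, Finset.sum_range_succ', h, add_comm]

lemma per_sum {M : Type*} [AddCommMonoid M] (h : ℕ → M) (p : ℕ)
    (hper : ∀ j, h (j + p) = h j) (q : ℕ) :
    ∑ j ∈ Finset.range (p * q), h j = q • ∑ i ∈ Finset.range p, h i := by
  have haux : ∀ k j, h (j + p * k) = h j := by
    intro k
    induction k with
    | zero => simp
    | succ k ih =>
        intro j
        rw [Nat.mul_succ, ← Nat.add_assoc, hper (j + p * k), ih j]
  induction q with
  | zero => simp
  | succ q ih =>
      rw [Nat.mul_succ, Finset.sum_range_add, ih, succ_nsmul]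
      congr 1
      refine Finset.sum_congr rfl fun i _ => ?_
      rw [Nat.add_comm (p * q) i, haux q i]

/-- The iterate of a homeomorphism, as a homeomorphism. -/
def iterHomeo {X : Type*} [TopologicalSpace X] (T : X ≃ₜ X) : ℕ → X ≃ₜ X
  | 0 => Homeomorph.refl X
  | n + 1 => (iterHomeo T n).trans T

lemma iterHomeo_coe {X : Type*} [TopologicalSpace X] (T : X ≃ₜ X) (n : ℕ) :
    ⇑(iterHomeo T n) = (⇑T)^[n] := by
  induction n with
  | zero => rfl
  | succ n ih =>
      rw [Function.iterate_succ']
      funext x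
      show T ((iterHomeo T n) x) = (⇑T ∘ (⇑T)^[n]) x
      rw [ih]
      rfl

end Helpers
end KB
open MeasureTheory Filter Topology
open scoped ENNReal NNReal

noncomputable section

/-- Birkhoff average `A_k f(x, y) = (1/k) Σ_{j<k} f(T^j x, S^j y)`. -/
def birk2 {X Y : Type*} (T : X → X) (S : Y → Y) (f : X × Y → ℝ) (k : ℕ) (x : X) (y : Y) : ℝ :=
  (k : ℝ)⁻¹ * ∑ j ∈ Finset.range k, f ((Prod.map T S)^[j] (x, y))

/-- The set of invariant Borel probability measures of a map. -/
def invMeas {Z : Type*} [MeasurableSpace Z] (U : Z → Z) : Set (ProbabilityMeasure Z) :=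
  {μ | μ.toMeasure.map U = μ.toMeasure}

/-- `ψ_f(ν) = min { ∫ f dλ : λ ∈ M_{T×S}(X × Y), (π_Y)_* λ = ν }`. -/
def psi2 {X Y : Type*} [MeasurableSpace X] [MeasurableSpace Y]
    (T : X → X) (S : Y → Y) (f : X × Y → ℝ) (ν : ProbabilityMeasure Y) : ℝ :=
  sInf {r | ∃ lam ∈ invMeas (Prod.map T S), lam.toMeasure.map Prod.snd = ν.toMeasure ∧
    r = ∫ p, f p ∂lam.toMeasure}

/-- `α(f) = sup_{ν ∈ M_S(Y)} ψ_f(ν)`. -/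
def alpha2 {X Y : Type*} [MeasurableSpace X] [MeasurableSpace Y]
    (T : X → X) (S : Y → Y) (f : X × Y → ℝ) : ℝ :=
  sSup {r | ∃ ν ∈ invMeas S, r = psi2 T S f ν}

/-- `R_f`: points `(x, y)` whose Birkhoff averages converge. -/
def reg2 {X Y : Type*} (T : X → X) (S : Y → Y) (f : X × Y → ℝ) : Set (X × Y) :=
  {p | ∃ L : ℝ, Tendsto (fun k : ℕ => birk2 T S f k p.1 p.2) atTop (𝓝 L)}

/-- `β(f) = sup_{y ∈ π_Y(R_f)} inf_{(x,y) ∈ R_f} lim_k A_k f(x, y)`. -/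
def beta2 {X Y : Type*} (T : X → X) (S : Y → Y) (f : X × Y → ℝ) : ℝ :=
  sSup {r | ∃ y : Y, (∃ x : X, (x, y) ∈ reg2 T S f) ∧
    r = sInf {L | ∃ x : X, (x, y) ∈ reg2 T S f ∧
      Tendsto (fun k : ℕ => birk2 T S f k x y) atTop (𝓝 L)}}

/-- `γ(f) = sup_{y ∈ Y} inf_{x ∈ X} limsup_k A_k f(x, y)`. -/
def gamma2 {X Y : Type*} (T : X → X) (S : Y → Y) (f : X × Y → ℝ) : ℝ :=
  ⨆ y : Y, ⨅ x : X, limsup (fun k : ℕ => birk2 T S f k x y) atTop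

/-- `δ(f) = limsup_k max_{y ∈ Y} min_{x ∈ X} A_k f(x, y)`. -/
def delta2 {X Y : Type*} (T : X → X) (S : Y → Y) (f : X × Y → ℝ) : ℝ :=
  limsup (fun k : ℕ => ⨆ y : Y, ⨅ x : X, birk2 T S f k x y) atTop

/-- The invariant probability measures supported on a single closed (periodic) orbit. -/
def Mco {Z : Type*} [MeasurableSpace Z] (U : Z → Z) : Set (ProbabilityMeasure Z) :=
  {μ | ∃ (k : ℕ) (z : Z), 0 < k ∧ U^[k] z = z ∧
    μ.toMeasure = (k : ℝ≥0∞)⁻¹ • ∑ j ∈ Finset.range k, Measure.dirac (U^[j] z)}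

/-- `α_per(f)`: as `α(f)`, but with both measures ranging over closed-orbit measures. -/
def alphaPer2 {X Y : Type*} [MeasurableSpace X] [MeasurableSpace Y]
    (T : X → X) (S : Y → Y) (f : X × Y → ℝ) : ℝ :=
  sSup {r | ∃ ν ∈ Mco S,
    r = sInf {t | ∃ lam ∈ Mco (Prod.map T S), lam.toMeasure.map Prod.snd = ν.toMeasure ∧
      t = ∫ p, f p ∂lam.toMeasure}}

/-- The set of periodic points. -/
def perPts {Z : Type*} (U : Z → Z) : Set Z :=
  {z | ∃ t : ℕ, 0 < t ∧ U^[t] z = z}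

/-- `δ_per(f) = limsup_k sup_{y ∈ Per_S(Y)} inf_{x ∈ Per_T(X)} A_k f(x, y)`. -/
def deltaPer2 {X Y : Type*} (T : X → X) (S : Y → Y) (f : X × Y → ℝ) : ℝ :=
  limsup (fun k : ℕ => sSup {r | ∃ y ∈ perPts S,
    r = sInf {t | ∃ x ∈ perPts T, t = birk2 T S f k x y}}) atTop

/-- The `j`-th power (`j : ℤ`) of a homeomorphism, applied to a point. -/
def zit {X : Type*} [TopologicalSpace X] (T : X ≃ₜ X) (j : ℤ) (x : X) : X :=
  (T.toEquiv ^ j) x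

/-- The specification property for `(X, T)` (with respect to the metric of `X`):
for every `η > 0` there is `D = D(η)` such that every `D`-spaced specification
`ξ = (x_i, [a_i, b_i])_{i=1}^n` admits an `η`-tracing point. -/
def SpecProp {X : Type*} [MetricSpace X] (T : X ≃ₜ X) : Prop :=
  ∀ η : ℝ, 0 < η → ∃ D : ℕ, 0 < D ∧
    ∀ (n : ℕ) (x : Fin (n + 1) → X) (a b : Fin (n + 1) → ℤ),
      (∀ i, a i ≤ b i) →
      (∀ i : Fin n, (D : ℤ) ≤ a i.succ - b i.castSucc) →
      ∃ x' : X, ∀ i : Fin (n + 1), ∀ j : ℤ, a i ≤ j → j ≤ b i →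
        dist (zit T j x') (zit T j (x i)) < η

/-- The periodic specification property for `(X, T)`: as `SpecProp`, but the tracing
point can moreover be chosen of period `b_n - a_1 + D`. -/
def PerSpecProp {X : Type*} [MetricSpace X] (T : X ≃ₜ X) : Prop :=
  ∀ η : ℝ, 0 < η → ∃ D : ℕ, 0 < D ∧
    ∀ (n : ℕ) (x : Fin (n + 1) → X) (a b : Fin (n + 1) → ℤ),
      (∀ i, a i ≤ b i) →
      (∀ i : Fin n, (D : ℤ) ≤ a i.succ - b i.castSucc) →
      ∃ x' : X, (∀ i : Fin (n + 1), ∀ j : ℤ, a i ≤ j → j ≤ b i →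
          dist (zit T j x') (zit T j (x i)) < η) ∧
        zit T (b (Fin.last n) - a 0 + (D : ℤ)) x' = x'

/-- let `y₀ ∈ Y` have `S^{s₀} y₀ = y₀` and let
`ν = (1/s₀) Σ_{j<s₀} δ_{S^j y₀}`.  Then the `(T×S)`-invariant probability measures
on `X × Y` with second marginal `ν` are exactly the measures
`(1/s₀) Σ_{j<s₀} (T×S)^j_* (μ × δ_{y₀})` with `μ` a `T^{s₀}`-invariant probability
measure on `X`.  Consequently `ψ_f(ν) ≥ min_{x ∈ X} (1/s₀) Σ_{j<s₀} f(T^j x, S^j y₀)`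
for every `f ∈ C(X × Y)`. -/
theorem stmt14
    {X Y : Type*}
    [MetricSpace X] [CompactSpace X] [Nonempty X] [MeasurableSpace X] [BorelSpace X]
    [MetricSpace Y] [CompactSpace Y] [Nonempty Y] [MeasurableSpace Y] [BorelSpace Y]
    (T : X ≃ₜ X) (S : Y ≃ₜ Y)
    (y₀ : Y) (s₀ : ℕ) (hs₀ : 0 < s₀) (hper : (⇑S)^[s₀] y₀ = y₀)
    (ν : ProbabilityMeasure Y)
    (hν : ν.toMeasure
      = (s₀ : ℝ≥0∞)⁻¹ • ∑ j ∈ Finset.range s₀, Measure.dirac ((⇑S)^[j] y₀)) :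
    ({m : Measure (X × Y) | IsProbabilityMeasure m ∧
        m.map (Prod.map ⇑T ⇑S) = m ∧ m.map Prod.snd = ν.toMeasure}
      = {m : Measure (X × Y) | ∃ μ : Measure X, IsProbabilityMeasure μ ∧
          μ.map ((⇑T)^[s₀]) = μ ∧
          m = (s₀ : ℝ≥0∞)⁻¹ • ∑ j ∈ Finset.range s₀,
            Measure.map ((Prod.map ⇑T ⇑S)^[j]) (μ.prod (Measure.dirac y₀))}) ∧
    ∀ f : X × Y → ℝ, Continuous f →
      (⨅ x : X, birk2 (⇑T) (⇑S) f s₀ x y₀) ≤ psi2 (⇑T) (⇑S) f ν := by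
  classical
  have hTm : Measurable ⇑T := T.continuous.measurable
  have hSm : Measurable ⇑S := S.continuous.measurable
  have hF : Measurable (Prod.map ⇑T ⇑S) := hTm.prodMap hSm
  have hFj : ∀ j : ℕ, Measurable ((Prod.map ⇑T ⇑S)^[j]) := fun j => hF.iterate j
  have hSj : ∀ j : ℕ, Measurable ((⇑S)^[j]) := fun j => hSm.iterate j
  have hTj : ∀ j : ℕ, Measurable ((⇑T)^[j]) := fun j => hTm.iterate j
  have hTc : ∀ j : ℕ, Continuous ((⇑T)^[j]) := fun j => by
    rw [← KB.iterHomeo_coe]; exact (KB.iterHomeo T j).continuous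
  have hSc : ∀ j : ℕ, Continuous ((⇑S)^[j]) := fun j => by
    rw [← KB.iterHomeo_coe]; exact (KB.iterHomeo S j).continuous
  have hFc : ∀ j : ℕ, Continuous ((Prod.map ⇑T ⇑S)^[j]) := fun j => by
    rw [Prod.map_iterate]; exact (hTc j).prodMap (hSc j)
  have hsndF : ∀ j : ℕ, Prod.snd ∘ (Prod.map ⇑T ⇑S)^[j] = (⇑S)^[j] ∘ Prod.snd := by
    intro j; rw [Prod.map_iterate]; rfl
  have hfstF : ∀ j : ℕ, Prod.fst ∘ (Prod.map ⇑T ⇑S)^[j] = (⇑T)^[j] ∘ Prod.fst := by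
    intro j; rw [Prod.map_iterate]; rfl
  have hsing : ∀ z : Y, MeasurableSet (Prod.snd ⁻¹' {z} : Set (X × Y)) :=
    fun z => (measurableSet_singleton z).preimage measurable_snd
  have hs₀E0 : ((s₀ : ℝ≥0∞)) ≠ 0 := Nat.cast_ne_zero.mpr hs₀.ne'
  have hs₀Et : ((s₀ : ℝ≥0∞)) ≠ ⊤ := ENNReal.natCast_ne_top s₀
  -- The ⊇ inclusion
  have hsup : ∀ μ : Measure X, IsProbabilityMeasure μ → μ.map ((⇑T)^[s₀]) = μ →
      (IsProbabilityMeasure ((s₀ : ℝ≥0∞)⁻¹ • ∑ j ∈ Finset.range s₀,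
          Measure.map ((Prod.map ⇑T ⇑S)^[j]) (μ.prod (Measure.dirac y₀))) ∧
        ((s₀ : ℝ≥0∞)⁻¹ • ∑ j ∈ Finset.range s₀,
          Measure.map ((Prod.map ⇑T ⇑S)^[j]) (μ.prod (Measure.dirac y₀))).map
            (Prod.map ⇑T ⇑S)
          = (s₀ : ℝ≥0∞)⁻¹ • ∑ j ∈ Finset.range s₀,
            Measure.map ((Prod.map ⇑T ⇑S)^[j]) (μ.prod (Measure.dirac y₀)) ∧
        ((s₀ : ℝ≥0∞)⁻¹ • ∑ j ∈ Finset.range s₀,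
          Measure.map ((Prod.map ⇑T ⇑S)^[j]) (μ.prod (Measure.dirac y₀))).map Prod.snd
          = ν.toMeasure) := by
    intro μ hμp hμinv
    haveI := hμp
    refine ⟨⟨?_⟩, ?_, ?_⟩
    · rw [Measure.smul_apply, Measure.finset_sum_apply]
      have he : ∀ j ∈ Finset.range s₀,
          (Measure.map ((Prod.map ⇑T ⇑S)^[j]) (μ.prod (Measure.dirac y₀))) Set.univ
            = 1 := by
        intro j _
        rw [Measure.map_apply (hFj j) MeasurableSet.univ, Set.preimage_univ]
        exact measure_univ
      rw [Finset.sum_congr rfl he, Finset.sum_const, Finset.card_range, nsmul_eq_mul,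
        mul_one, smul_eq_mul, ENNReal.inv_mul_cancel hs₀E0 hs₀Et]
    · rw [Measure.map_smul, KB.map_finsum hF]
      congr 1
      have hstep : ∀ j ∈ Finset.range s₀,
          ((μ.prod (Measure.dirac y₀)).map ((Prod.map ⇑T ⇑S)^[j])).map (Prod.map ⇑T ⇑S)
            = (μ.prod (Measure.dirac y₀)).map ((Prod.map ⇑T ⇑S)^[j + 1]) := by
        intro j _
        rw [Measure.map_map hF (hFj j), ← Function.iterate_succ']
      rw [Finset.sum_congr rfl hstep]
      refine KB.cycle_sum (fun j => (μ.prod (Measure.dirac y₀)).map ((Prod.map ⇑T ⇑S)^[j]))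
        s₀ hs₀ ?_
      show (μ.prod (Measure.dirac y₀)).map ((Prod.map ⇑T ⇑S)^[s₀])
        = (μ.prod (Measure.dirac y₀)).map ((Prod.map ⇑T ⇑S)^[0])
      rw [Function.iterate_zero, Measure.map_id, Prod.map_iterate,
        ← Measure.map_prod_map _ _ (hTj s₀) (hSj s₀), hμinv,
        Measure.map_dirac' (hSj s₀), hper]
    · rw [hν, Measure.map_smul, KB.map_finsum measurable_snd]
      congr 1
      refine Finset.sum_congr rfl fun j _ => ?_
      rw [Measure.map_map measurable_snd (hFj j), hsndF j,
        ← Measure.map_map (hSj j) measurable_snd, Measure.map_snd_prod, measure_univ,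
        one_smul, Measure.map_dirac' (hSj j)]
  -- The set equality
  have hseteq : ({m : Measure (X × Y) | IsProbabilityMeasure m ∧
        m.map (Prod.map ⇑T ⇑S) = m ∧ m.map Prod.snd = ν.toMeasure}
      = {m : Measure (X × Y) | ∃ μ : Measure X, IsProbabilityMeasure μ ∧
          μ.map ((⇑T)^[s₀]) = μ ∧
          m = (s₀ : ℝ≥0∞)⁻¹ • ∑ j ∈ Finset.range s₀,
            Measure.map ((Prod.map ⇑T ⇑S)^[j]) (μ.prod (Measure.dirac y₀))}) := by
    refine Set.Subset.antisymm ?_ ?_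
    · -- the hard inclusion
      rintro m ⟨hmp, hminv, hmmarg⟩
      haveI := hmp
      set p := Function.minimalPeriod ⇑S y₀ with hpdef
      have hperS : Function.IsPeriodicPt ⇑S s₀ y₀ := hper
      have hppos : 0 < p := hperS.minimalPeriod_pos hs₀
      have hpp : (⇑S)^[p] y₀ = y₀ := Function.isPeriodicPt_minimalPeriod ⇑S y₀
      obtain ⟨q, hq⟩ : p ∣ s₀ := hperS.minimalPeriod_dvd
      have hminv_iter : ∀ j : ℕ, m.map ((Prod.map ⇑T ⇑S)^[j]) = m := by
        intro j
        induction j with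
        | zero => rw [Function.iterate_zero, Measure.map_id]
        | succ j ih => rw [Function.iterate_succ', ← Measure.map_map hF (hFj j), ih, hminv]
      set κ := m.restrict (Prod.snd ⁻¹' {y₀}) with hκdef
      have step1 : ∀ j : ℕ, κ.map ((Prod.map ⇑T ⇑S)^[j])
          = m.restrict (Prod.snd ⁻¹' {(⇑S)^[j] y₀}) := by
        intro j
        have hpre : (Prod.map ⇑T ⇑S)^[j] ⁻¹' (Prod.snd ⁻¹' {(⇑S)^[j] y₀})
            = Prod.snd ⁻¹' {y₀} := by
          ext z
          simp only [Set.mem_preimage, Set.mem_singleton_iff]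
          rw [show Prod.snd ((Prod.map ⇑T ⇑S)^[j] z) = (⇑S)^[j] z.2 from
            congrFun (hsndF j) z]
          exact ⟨fun h => (S.injective.iterate j) h, fun h => by rw [h]⟩
        calc κ.map ((Prod.map ⇑T ⇑S)^[j])
            = (m.restrict ((Prod.map ⇑T ⇑S)^[j] ⁻¹' (Prod.snd ⁻¹' {(⇑S)^[j] y₀}))).map
              ((Prod.map ⇑T ⇑S)^[j]) := by rw [hpre]
          _ = (m.map ((Prod.map ⇑T ⇑S)^[j])).restrict (Prod.snd ⁻¹' {(⇑S)^[j] y₀}) :=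
              (Measure.restrict_map (hFj j) (hsing _)).symm
          _ = m.restrict (Prod.snd ⁻¹' {(⇑S)^[j] y₀}) := by rw [hminv_iter j]
      have hdisj : ∀ i ∈ Finset.range p, ∀ j ∈ Finset.range p, i ≠ j →
          Disjoint (Prod.snd ⁻¹' {(⇑S)^[i] y₀} : Set (X × Y))
            (Prod.snd ⁻¹' {(⇑S)^[j] y₀}) := by
        intro i hi j hj hij
        refine Disjoint.preimage _ (Set.disjoint_singleton.mpr fun heq => hij ?_)
        exact Function.iterate_injOn_Iio_minimalPeriod
          (Set.mem_Iio.mpr (Finset.mem_range.mp hi))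
          (Set.mem_Iio.mpr (Finset.mem_range.mp hj)) heq
      have step2 : ∀ A : Set (X × Y), MeasurableSet A →
          m A = ∑ i ∈ Finset.range p, m (A ∩ Prod.snd ⁻¹' {(⇑S)^[i] y₀}) := by
        intro A hA
        set B : Set Y := ⋃ i ∈ Finset.range p, {(⇑S)^[i] y₀} with hB
        have hBm : MeasurableSet B :=
          (Finset.range p).measurableSet_biUnion fun i _ => measurableSet_singleton _
        set U : Set (X × Y) := Prod.snd ⁻¹' B with hU
        have hUm : MeasurableSet U := hBm.preimage measurable_snd
        have hcompl : m Uᶜ = 0 := by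
          rw [hU, ← Set.preimage_compl, ← Measure.map_apply measurable_snd hBm.compl,
            hmmarg, hν]
          rw [Measure.smul_apply, Measure.finset_sum_apply]
          have hz : ∀ j ∈ Finset.range s₀, (Measure.dirac ((⇑S)^[j] y₀)) Bᶜ = 0 := by
            intro j _
            rw [Measure.dirac_apply' _ hBm.compl]
            have hmem : (⇑S)^[j] y₀ ∈ B := by
              rw [hB]
              refine Set.mem_biUnion (Finset.mem_range.mpr (Nat.mod_lt j hppos)) ?_
              rw [Set.mem_singleton_iff, hpdef, Function.iterate_mod_minimalPeriod_eq]
            simp [hmem]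
          rw [Finset.sum_congr rfl hz]
          simp
        have h1 : m A = m (A ∩ U) := by
          have := measure_inter_add_diff A hUm (μ := m)
          have h2 : m (A \ U) = 0 :=
            measure_mono_null (Set.diff_subset_compl A U) hcompl
          rw [← this, h2, add_zero]
        rw [h1]
        have h3 : A ∩ U = ⋃ i ∈ Finset.range p, A ∩ Prod.snd ⁻¹' {(⇑S)^[i] y₀} := by
          rw [hU, hB, Set.preimage_iUnion₂, Set.inter_iUnion₂]
        rw [h3]
        refine measure_biUnion_finset ?_ fun i _ => hA.inter (hsing _)
        intro i hi j hj hij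
        exact ((hdisj i hi j hj hij).mono Set.inter_subset_right Set.inter_subset_right)
      have step2' : m = ∑ i ∈ Finset.range p, κ.map ((Prod.map ⇑T ⇑S)^[i]) := by
        refine Measure.ext fun A hA => ?_
        rw [Measure.finset_sum_apply]
        have he : ∀ i ∈ Finset.range p,
            (κ.map ((Prod.map ⇑T ⇑S)^[i])) A = m (A ∩ Prod.snd ⁻¹' {(⇑S)^[i] y₀}) := by
          intro i _
          rw [step1 i, Measure.restrict_apply hA]
        rw [Finset.sum_congr rfl he]
        exact step2 A hA
      haveI : IsFiniteMeasure κ := by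
        rw [hκdef]; infer_instance
      set κf := κ.map Prod.fst with hκf
      haveI : IsFiniteMeasure κf := by
        constructor
        rw [hκf, Measure.map_apply measurable_fst MeasurableSet.univ, Set.preimage_univ]
        exact measure_lt_top κ _
      have hκprod : κ = κf.prod (Measure.dirac y₀) := by
        have hzero : κ ((Prod.snd ⁻¹' {y₀})ᶜ : Set (X × Y)) = 0 := by
          rw [hκdef, Measure.restrict_apply (hsing y₀).compl]
          simp
        have hae : (fun z : X × Y => (z.1, y₀)) =ᵐ[κ] id := by
          rw [Filter.eventuallyEq_iff_exists_mem]
          refine ⟨Prod.snd ⁻¹' {y₀}, ?_, fun z hz => ?_⟩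
          · rw [mem_ae_iff]; exact hzero
          · have : z.2 = y₀ := hz
            rw [id]
            exact Prod.ext rfl this.symm
        calc κ = κ.map id := (Measure.map_id).symm
          _ = κ.map (fun z : X × Y => (z.1, y₀)) := (Measure.map_congr hae).symm
          _ = (κ.map Prod.fst).map (fun x : X => (x, y₀)) := by
              rw [Measure.map_map measurable_prodMk_right measurable_fst]
              rfl
          _ = κf.prod (Measure.dirac y₀) := by rw [Measure.prod_dirac]
      have huniv : (p : ℝ≥0∞) * κ Set.univ = 1 := by
        have h1 : (1 : ℝ≥0∞) = m Set.univ := measure_univ.symm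
        rw [h1, step2' ]
        rw [Measure.finset_sum_apply]
        have he : ∀ i ∈ Finset.range p, (κ.map ((Prod.map ⇑T ⇑S)^[i])) Set.univ
            = κ Set.univ := by
          intro i _
          rw [Measure.map_apply (hFj i) MeasurableSet.univ, Set.preimage_univ]
        rw [Finset.sum_congr rfl he, Finset.sum_const, Finset.card_range, nsmul_eq_mul]
      refine ⟨(p : ℝ≥0∞) • κf, ⟨?_⟩, ?_, ?_⟩
      · rw [Measure.smul_apply, smul_eq_mul, hκf,
          Measure.map_apply measurable_fst MeasurableSet.univ, Set.preimage_univ]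
        exact huniv
      · -- T^[s₀] invariance of p • κf
        have hκinv : κ.map ((Prod.map ⇑T ⇑S)^[p]) = κ := by
          rw [step1 p, hpp, ← hκdef]
        have hκfinv : κf.map ((⇑T)^[p]) = κf := by
          rw [hκf, Measure.map_map (hTj p) measurable_fst, ← hfstF p,
            ← Measure.map_map measurable_fst (hFj p), hκinv]
        have hκfit : ∀ k : ℕ, κf.map ((⇑T)^[p * k]) = κf := by
          intro k
          induction k with
          | zero => rw [Nat.mul_zero, Function.iterate_zero, Measure.map_id]
          | succ k ih =>
              rw [Nat.mul_succ, Function.iterate_add,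
                ← Measure.map_map (hTj (p * k)) (hTj p), hκfinv, ih]
        rw [Measure.map_smul, hq, hκfit q]
      · -- reconstruction of m
        haveI hμp' : IsProbabilityMeasure ((p : ℝ≥0∞) • κf) := by
          constructor
          rw [Measure.smul_apply, smul_eq_mul, hκf,
            Measure.map_apply measurable_fst MeasurableSet.univ, Set.preimage_univ]
          exact huniv
        have hprodsmul : ((p : ℝ≥0∞) • κf).prod (Measure.dirac y₀) = (p : ℝ≥0∞) • κ := by
          rw [Measure.prod_dirac, Measure.map_smul, ← Measure.prod_dirac, ← hκprod]
        have hsummand : ∀ j : ℕ,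
            Measure.map ((Prod.map ⇑T ⇑S)^[j]) (((p : ℝ≥0∞) • κf).prod (Measure.dirac y₀))
              = (p : ℝ≥0∞) • m.restrict (Prod.snd ⁻¹' {(⇑S)^[j] y₀}) := by
          intro j
          rw [hprodsmul, Measure.map_smul, step1 j]
        have hper' : ∀ j : ℕ, m.restrict (Prod.snd ⁻¹' {(⇑S)^[j + p] y₀})
            = m.restrict (Prod.snd ⁻¹' {(⇑S)^[j] y₀}) := by
          intro j
          rw [Function.iterate_add_apply, hpp]
        have hsum : ∑ j ∈ Finset.range s₀,
            Measure.map ((Prod.map ⇑T ⇑S)^[j]) (((p : ℝ≥0∞) • κf).prod (Measure.dirac y₀))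
            = (p : ℝ≥0∞) • ((q : ℝ≥0∞) • m) := by
          rw [Finset.sum_congr rfl fun j _ => hsummand j, ← Finset.smul_sum]
          congr 1
          rw [hq]
          rw [KB.per_sum (fun j => m.restrict (Prod.snd ⁻¹' {(⇑S)^[j] y₀})) p hper' q]
          rw [← Nat.cast_smul_eq_nsmul ℝ≥0∞]
          congr 1
          calc ∑ i ∈ Finset.range p, m.restrict (Prod.snd ⁻¹' {(⇑S)^[i] y₀})
              = ∑ i ∈ Finset.range p, κ.map ((Prod.map ⇑T ⇑S)^[i]) :=
                Finset.sum_congr rfl fun i _ => (step1 i).symm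
            _ = m := step2'.symm
        rw [hsum, smul_smul, smul_smul, mul_assoc, ← Nat.cast_mul, ← hq,
          ENNReal.inv_mul_cancel hs₀E0 hs₀Et, one_smul]
    · rintro m ⟨μ, hμp, hμinv, rfl⟩
      exact hsup μ hμp hμinv
  refine ⟨hseteq, ?_⟩
  intro f hf
  have hcs : HasCompactSupport f := (isClosed_tsupport f).isCompact
  have hbirkc : Continuous fun x : X => birk2 (⇑T) (⇑S) f s₀ x y₀ := by
    simp only [birk2]
    refine continuous_const.mul (continuous_finset_sum _ fun j _ => ?_)
    exact (hf.comp (hFc j)).comp (continuous_id.prodMk continuous_const)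
  obtain ⟨μ₀, hμ₀p, hμ₀inv⟩ := KB.exists_invariant_prob (KB.iterHomeo T s₀)
  rw [KB.iterHomeo_coe] at hμ₀inv
  obtain ⟨hm₀p, hm₀inv, hm₀marg⟩ := hsup μ₀ hμ₀p hμ₀inv
  have hne : {r : ℝ | ∃ lam ∈ invMeas (Prod.map ⇑T ⇑S),
      lam.toMeasure.map Prod.snd = ν.toMeasure ∧
      r = ∫ p, f p ∂lam.toMeasure}.Nonempty := by
    refine ⟨∫ p, f p ∂((s₀ : ℝ≥0∞)⁻¹ • ∑ j ∈ Finset.range s₀,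
        Measure.map ((Prod.map ⇑T ⇑S)^[j]) (μ₀.prod (Measure.dirac y₀))),
      ⟨_, hm₀p⟩, hm₀inv, hm₀marg, rfl⟩
  show _ ≤ sInf _
  refine le_csInf hne ?_
  rintro r ⟨lam, hlaminv, hlammarg, rfl⟩
  have hmem : lam.toMeasure ∈ {m : Measure (X × Y) | ∃ μ : Measure X,
      IsProbabilityMeasure μ ∧ μ.map ((⇑T)^[s₀]) = μ ∧
      m = (s₀ : ℝ≥0∞)⁻¹ • ∑ j ∈ Finset.range s₀,
        Measure.map ((Prod.map ⇑T ⇑S)^[j]) (μ.prod (Measure.dirac y₀))} := by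
    rw [← hseteq]
    exact ⟨lam.2, hlaminv, hlammarg⟩
  obtain ⟨μ, hμp, hμinv, hmeq⟩ := hmem
  haveI := hμp
  have hintj : ∀ j : ℕ, Integrable (fun x : X => f ((Prod.map ⇑T ⇑S)^[j] (x, y₀))) μ := by
    intro j
    refine Continuous.integrable_of_hasCompactSupport
      ((hf.comp (hFc j)).comp (continuous_id.prodMk continuous_const)) ?_
    exact (isClosed_tsupport _).isCompact
  have hIj : ∀ j : ℕ,
      ∫ q, f q ∂(Measure.map ((Prod.map ⇑T ⇑S)^[j]) (μ.prod (Measure.dirac y₀)))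
        = ∫ x, f ((Prod.map ⇑T ⇑S)^[j] (x, y₀)) ∂μ := by
    intro j
    have hco : Continuous fun q : X × Y => f ((Prod.map ⇑T ⇑S)^[j] q) := hf.comp (hFc j)
    rw [integral_map (hFj j).aemeasurable hf.aestronglyMeasurable, Measure.prod_dirac,
      integral_map measurable_prodMk_right.aemeasurable hco.aestronglyMeasurable]
  have hIlam : ∫ q, f q ∂lam.toMeasure
      = ∫ x, birk2 (⇑T) (⇑S) f s₀ x y₀ ∂μ := by
    rw [hmeq, integral_smul_measure, integral_finset_sum_measure ?hInt]
    case hInt =>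
      intro j _
      haveI : IsProbabilityMeasure
          (Measure.map ((Prod.map ⇑T ⇑S)^[j]) (μ.prod (Measure.dirac y₀))) := by
        constructor
        rw [Measure.map_apply (hFj j) MeasurableSet.univ, Set.preimage_univ]
        exact measure_univ
      exact hf.integrable_of_hasCompactSupport hcs
    rw [Finset.sum_congr rfl fun j _ => hIj j, ← integral_finset_sum _ fun j _ => hintj j,
      ← integral_smul]
    congr 1
    funext x
    rw [birk2, smul_eq_mul, ENNReal.toReal_inv, ENNReal.toReal_natCast]
  rw [hIlam]
  have hbb : BddBelow (Set.range fun x : X => birk2 (⇑T) (⇑S) f s₀ x y₀) :=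
    (isCompact_range hbirkc).bddBelow
  have hbint : Integrable (fun x : X => birk2 (⇑T) (⇑S) f s₀ x y₀) μ :=
    hbirkc.integrable_of_hasCompactSupport (isClosed_tsupport _).isCompact
  have h1 : ∫ _x : X, (⨅ x' : X, birk2 (⇑T) (⇑S) f s₀ x' y₀) ∂μ
      = ⨅ x' : X, birk2 (⇑T) (⇑S) f s₀ x' y₀ := by
    rw [integral_const, probReal_univ, one_smul]
  calc (⨅ x : X, birk2 (⇑T) (⇑S) f s₀ x y₀)
      = ∫ _x : X, (⨅ x' : X, birk2 (⇑T) (⇑S) f s₀ x' y₀) ∂μ := h1.symm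
    _ ≤ ∫ x, birk2 (⇑T) (⇑S) f s₀ x y₀ ∂μ :=
        integral_mono (integrable_const _) hbint fun x => ciInf_le hbb x
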